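/- arXiv:math/0309090 — 3 statements merged into one kernel-verified Lean document; each statement's English description precedes it below -/
import Mathlib

section
/- Let p be an odd prime, F a field containing a primitive p-th root of unity, K/F cyclic of degree p with Galois group generated by σ, J = K^×/K^{×p}, and e: J_{p-1} → F_p the index homomorphism. Then for every [γ] ∈ J with [γ]^{σ-1} ∈ J_{p-1}, one has e([γ]^{σ-1}) = 0; i.e., e vanishes on the image of σ - 1. -/
noncomputable section

/-- The subgroup of `p`-th powers in `K^×`. -/
def pthPowers (p : ℕ) (K : Type) [Field K] : Subgroup Kˣ :=
  (powMonoidHom p : Kˣ →* Kˣ).range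

instance (p : ℕ) (K : Type) [Field K] : (pthPowers p K).Normal :=
  Subgroup.normal_of_comm _

/-- The `𝔽_p[Gal(K/F)]`-module `J = K^×/K^{×p}` (written multiplicatively). -/
abbrev Jmod (p : ℕ) (K : Type) [Field K] := Kˣ ⧸ pthPowers p K

/-- The class `[γ] ∈ J` of `γ ∈ K^×`. -/
def mkJ (p : ℕ) (K : Type) [Field K] : Kˣ →* Jmod p K := QuotientGroup.mk' _

/-- The action of an `F`-automorphism `σ` of `K` on `K^×`. -/
def sigU (p : ℕ) (K : Type) [Field K] (F : Type) [Field F] [Algebra F K]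
    (σ : K ≃ₐ[F] K) : Kˣ →* Kˣ :=
  Units.map (σ.toAlgHom.toRingHom.toMonoidHom)

/-- The action of `σ` on `J = K^×/K^{×p}`. -/
def sigJ (p : ℕ) (K : Type) [Field K] (F : Type) [Field F] [Algebra F K]
    (σ : K ≃ₐ[F] K) : Jmod p K →* Jmod p K :=
  QuotientGroup.map _ _ (sigU p K F σ) (by
    rintro x ⟨y, rfl⟩
    exact ⟨sigU p K F σ y, by simp [powMonoidHom, map_pow]⟩)

/-- The action of `σ - 1` on the multiplicative module `J`: `x ↦ σ(x)·x⁻¹`. -/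
def rhoJ (p : ℕ) (K : Type) [Field K] (F : Type) [Field F] [Algebra F K]
    (σ : K ≃ₐ[F] K) : Jmod p K →* Jmod p K :=
  MonoidHom.mk' (fun x => sigJ p K F σ x * x⁻¹) (by
    intro a b
    try simp only []
    rw [map_mul, mul_inv_rev, mul_comm (b⁻¹) (a⁻¹)]
    exact mul_mul_mul_comm (sigJ p K F σ a) (sigJ p K F σ b) a⁻¹ b⁻¹)

/-- The action of `(σ - 1)^n` on `J`. -/
def rhoPowJ (p : ℕ) (K : Type) [Field K] (F : Type) [Field F] [Algebra F K]
    (σ : K ≃ₐ[F] K) : ℕ → (Jmod p K →* Jmod p K)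
  | 0 => MonoidHom.id _
  | n + 1 => (rhoJ p K F σ).comp (rhoPowJ p K F σ n)

end


/-- The index homomorphism `e : J_{p-1} → 𝔽_p` (characterized by
`ξ^{e([γ])} = σ(N(γ)^{1/p})/N(γ)^{1/p}`) vanishes on the image of `σ - 1`:
for every `[γ] ∈ J` with `[γ]^{σ-1} ∈ J_{p-1}`, `e([γ]^{σ-1}) = 0` (i.e. the value is the
identity of `Multiplicative (ZMod p)`). -/
theorem stmt_9 (p : ℕ) [Fact p.Prime] (hp2 : Odd p)
    (F K : Type) [Field F] [Field K] [Algebra F K]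
    (xi : F) (hxi : IsPrimitiveRoot xi p)
    (a : Fˣ) (alpha : K) (halpha : alpha ^ p = algebraMap F K a)
    (hadj : Algebra.adjoin F {alpha} = ⊤)
    (hdeg : Module.finrank F K = p)
    (sigma : K ≃ₐ[F] K) (hgen : ∀ eta : K ≃ₐ[F] K, eta ∈ Subgroup.zpowers sigma) :
    ∀ e : ↥((rhoPowJ p K F sigma (p - 1)).ker) →* Multiplicative (ZMod p),
      (∀ (γ : Kˣ) (hγ : mkJ p K γ ∈ (rhoPowJ p K F sigma (p - 1)).ker) (r : K),
        r ≠ 0 → r ^ p = algebraMap F K (Algebra.norm F (γ : K)) →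
        sigma r = algebraMap F K xi ^ (Multiplicative.toAdd (e ⟨mkJ p K γ, hγ⟩)).val * r) →
      ∀ (γ : Kˣ) (hmem : rhoJ p K F sigma (mkJ p K γ) ∈ (rhoPowJ p K F sigma (p - 1)).ker),
        e ⟨rhoJ p K F sigma (mkJ p K γ), hmem⟩ = 1 := by
  intro e he γ hmem
  have hp : 0 < p := (Fact.out : p.Prime).pos
  set γ' : Kˣ := sigU p K F sigma γ * γ⁻¹ with hγ'def
  have hmk : mkJ p K γ' = rhoJ p K F sigma (mkJ p K γ) := by
    simp only [mkJ, rhoJ, sigJ, map_mul, map_inv, MonoidHom.mk'_apply]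
    rfl
  have hγ' : mkJ p K γ' ∈ (rhoPowJ p K F sigma (p - 1)).ker := hmk ▸ hmem
  have hnorm : Algebra.norm F ((γ' : K)) = 1 := by
    have h1 : ((γ' : K)) = sigma (γ : K) * ((γ : K))⁻¹ := by
      simp [hγ'def, sigU]
    have hγne : (γ : K) ≠ 0 := γ.ne_zero
    rw [h1, map_mul, Algebra.norm_eq_of_algEquiv sigma, ← map_mul,
      mul_inv_cancel₀ hγne, map_one]
  have hr := he γ' hγ' 1 one_ne_zero (by rw [one_pow, hnorm, map_one])
  rw [map_one, mul_one] at hr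
  have hxipow : xi ^ (Multiplicative.toAdd (e ⟨mkJ p K γ', hγ'⟩)).val = 1 := by
    have : algebraMap F K (xi ^ (Multiplicative.toAdd (e ⟨mkJ p K γ', hγ'⟩)).val) = algebraMap F K 1 := by
      rw [map_pow, map_one, ← hr]
    exact (algebraMap F K).injective this
  have hdvd : p ∣ (Multiplicative.toAdd (e ⟨mkJ p K γ', hγ'⟩)).val :=
    hxi.dvd_of_pow_eq_one _ hxipow
  have hlt : (Multiplicative.toAdd (e ⟨mkJ p K γ', hγ'⟩)).val < p := by
    haveI : NeZero p := ⟨hp.ne'⟩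
    exact ZMod.val_lt _
  have hzero : (Multiplicative.toAdd (e ⟨mkJ p K γ', hγ'⟩)).val = 0 :=
    Nat.eq_zero_of_dvd_of_lt hdvd hlt
  have heq : (⟨mkJ p K γ', hγ'⟩ : ((rhoPowJ p K F sigma (p - 1)).ker))
      = ⟨rhoJ p K F sigma (mkJ p K γ), hmem⟩ := Subtype.ext hmk
  rw [heq] at hzero
  haveI : NeZero p := ⟨hp.ne'⟩
  have : Multiplicative.toAdd (e ⟨rhoJ p K F sigma (mkJ p K γ), hmem⟩) = 0 :=
    (ZMod.val_eq_zero _).mp hzero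
  exact Multiplicative.toAdd.injective this
end

section
/- Let p be a prime, F a field containing a primitive p-th root of unity, K/F cyclic of degree p with group G, and J = K^×/K^{×p} as F_p[G]-module. There is an exact sequence 0 → ⟨[a]⟩ → F^×/F^{×p} → J_1 → ⟨[a]⟩ where ⟨[a]⟩ ⊆ F^×/F^{×p} is generated by the class of a (where K = F(a^{1/p})), the second map is induced by inclusion F^× ⊆ K^×, J_1 is the G-fixed part of J, and the last map is induced by the norm N_{K/F}. Consequently, if [γ] ∈ J_1 is fixed by G and N_{K/F}(γ) ∈ a^{pZ}·F^{×p}, then [γ] = [f] in J for some f ∈ F^×. -/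
noncomputable section

/-- The map `F^×/F^{×p} → K^×/K^{×p}` induced by the inclusion `F^× ⊆ K^×`. -/
def epsJ (p : ℕ) (F K : Type) [Field F] [Field K] [Algebra F K] :
    Jmod p F →* Jmod p K :=
  QuotientGroup.map _ _ (Units.map (algebraMap F K).toMonoidHom) (by
    rintro x ⟨y, rfl⟩
    exact ⟨Units.map (algebraMap F K).toMonoidHom y, by simp [powMonoidHom, map_pow]⟩)

/-- The map `K^×/K^{×p} → F^×/F^{×p}` induced by the norm `N_{K/F}`. -/
def normJ (p : ℕ) (F K : Type) [Field F] [Field K] [Algebra F K] :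
    Jmod p K →* Jmod p F :=
  QuotientGroup.map _ _ (Units.map (Algebra.norm F : K →* F)) (by
    rintro x ⟨y, rfl⟩
    exact ⟨Units.map (Algebra.norm F : K →* F) y, by simp [powMonoidHom, map_pow]⟩)

end


namespace StmtAux

open Polynomial Module IntermediateField

variable {p : ℕ} [Fact p.Prime] {F K : Type} [Field F] [Field K] [Algebra F K]

@[simp] lemma sigU_coe (σ : K ≃ₐ[F] K) (u : Kˣ) :
    ((sigU p K F σ u : Kˣ) : K) = σ (u : K) := rfl

lemma aux_findim (hdeg : Module.finrank F K = p) : FiniteDimensional F K :=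
  FiniteDimensional.of_finrank_pos (by rw [hdeg]; exact (Fact.out : p.Prime).pos)

lemma aux_galois {xi : F} (hxi : IsPrimitiveRoot xi p) {a : Fˣ} {alpha : K}
    (halpha : alpha ^ p = algebraMap F K a)
    (hadj : Algebra.adjoin F {alpha} = ⊤)
    (hdeg : Module.finrank F K = p) : IsGalois F K := by
  have hp : p.Prime := Fact.out
  haveI : FiniteDimensional F K := aux_findim hdeg
  have hK : (primitiveRoots (Module.finrank F K) F).Nonempty :=
    ⟨xi, (mem_primitiveRoots (by rw [hdeg]; exact hp.pos)).2 (by rwa [hdeg])⟩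
  have ha : alpha ^ (Module.finrank F K) = algebraMap F K a := by rw [hdeg]; exact halpha
  have hα : F⟮alpha⟯ = ⊤ := by
    have hint : IsIntegral F alpha := IsIntegral.of_finite F alpha
    apply IntermediateField.toSubalgebra_injective
    rw [IntermediateField.adjoin_simple_toSubalgebra_of_isAlgebraic hint.isAlgebraic, hadj,
      IntermediateField.top_toSubalgebra]
  have H := irreducible_X_pow_sub_C_of_root_adjoin_eq_top ha hα
  haveI := isSplittingField_X_pow_sub_C_of_root_adjoin_eq_top hK ha hα
  exact isGalois_of_isSplittingField_X_pow_sub_C hK H K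

variable {sigma : K ≃ₐ[F] K}

lemma aux_fixed (hdeg : Module.finrank F K = p) (hGal : IsGalois F K)
    (hgen : ∀ eta : K ≃ₐ[F] K, eta ∈ Subgroup.zpowers sigma)
    (x : K) (hx : sigma x = x) : ∃ f : F, algebraMap F K f = x := by
  haveI : FiniteDimensional F K := aux_findim hdeg
  have hnat : ∀ m : ℕ, (sigma ^ m) x = x := by
    intro m
    induction m with
    | zero => rfl
    | succ k ih => rw [pow_succ, AlgEquiv.mul_apply, hx, ih]
  have hall : ∀ η : K ≃ₐ[F] K, η x = x := by
    intro η
    obtain ⟨n, rfl⟩ := hgen η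
    rcases n with m | m
    · simpa using hnat m
    · show (sigma ^ (Int.negSucc m)) x = x
      rw [zpow_negSucc]
      conv_lhs => rw [← hnat (m + 1)]
      exact (sigma ^ (m + 1)).symm_apply_apply x
  have hmem : x ∈ IntermediateField.fixedField (⊤ : Subgroup (K ≃ₐ[F] K)) := by
    intro g
    exact hall g
  have h2 : IntermediateField.fixedField (⊤ : Subgroup (K ≃ₐ[F] K)) = ⊥ :=
    ((IsGalois.tfae (F := F) (E := K)).out 0 1).mp hGal
  rw [h2] at hmem
  exact IntermediateField.mem_bot.mp hmem

end StmtAux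
namespace StmtAux

variable {p : ℕ} [Fact p.Prime] {F K : Type} [Field F] [Field K] [Algebra F K]

lemma aux_alpha_ne_zero {a : Fˣ} {alpha : K} (halpha : alpha ^ p = algebraMap F K a) :
    alpha ≠ 0 := by
  intro h
  have hp : p.Prime := Fact.out
  rw [h, zero_pow hp.ne_zero] at halpha
  exact a.ne_zero ((algebraMap F K).injective (by simpa using halpha.symm))

lemma aux_alpha_not_range {a : Fˣ} {alpha : K} (halpha : alpha ^ p = algebraMap F K a)
    (hadj : Algebra.adjoin F {alpha} = ⊤)
    (hdeg : Module.finrank F K = p) : alpha ∉ Set.range (algebraMap F K) := by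
  intro hmem
  have hle : Algebra.adjoin F {alpha} ≤ ⊥ := Algebra.adjoin_le (by
    intro x hx
    rw [Set.mem_singleton_iff] at hx
    subst hx
    exact Algebra.mem_bot.mpr hmem)
  rw [hadj] at hle
  have hbot : (⊥ : Subalgebra F K) = ⊤ := le_antisymm le_top (by simpa using hle)
  have h1 : Module.finrank F K = 1 := Subalgebra.bot_eq_top_iff_finrank_eq_one.mp hbot
  exact (Fact.out : p.Prime).ne_one (by rw [← hdeg, h1])

/-- Every `p`-th root of unity in `K` is a power of `ξ`. -/
lemma aux_root {xi : F} (hxi : IsPrimitiveRoot xi p) {z : K} (hz : z ^ p = 1) :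
    ∃ r < p, (algebraMap F K xi) ^ r = z := by
  haveI : NeZero p := ⟨(Fact.out : p.Prime).ne_zero⟩
  exact (hxi.map_of_injective (algebraMap F K).injective).eq_pow_of_pow_eq_one hz

variable {sigma : K ≃ₐ[F] K}

lemma aux_sigma_alpha {xi : F} (hxi : IsPrimitiveRoot xi p) {a : Fˣ} {alpha : K}
    (halpha : alpha ^ p = algebraMap F K a)
    (hadj : Algebra.adjoin F {alpha} = ⊤)
    (hdeg : Module.finrank F K = p) (hGal : IsGalois F K)
    (hgen : ∀ eta : K ≃ₐ[F] K, eta ∈ Subgroup.zpowers sigma) :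
    ∃ c < p, ¬ (p : ℕ) ∣ c ∧ sigma alpha = (algebraMap F K xi) ^ c * alpha := by
  have h0 : alpha ≠ 0 := aux_alpha_ne_zero halpha
  have hpow : (sigma alpha) ^ p = alpha ^ p := by
    rw [← map_pow, halpha, AlgEquiv.commutes]
  have hz : (sigma alpha * alpha⁻¹) ^ p = 1 := by
    rw [mul_pow, inv_pow, hpow]
    field_simp
  obtain ⟨c, hc, hcz⟩ := aux_root hxi hz
  refine ⟨c, hc, ?_, ?_⟩
  · intro hdvd
    have hc0 : c = 0 := Nat.eq_zero_of_dvd_of_lt hdvd hc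
    subst hc0
    have hfix : sigma alpha = alpha := by
      have h1 : sigma alpha * alpha⁻¹ = 1 := by rw [← hcz, pow_zero]
      exact (div_eq_one_iff_eq h0).mp (by rwa [div_eq_mul_inv])
    obtain ⟨f, hf⟩ := aux_fixed hdeg hGal hgen alpha hfix
    exact aux_alpha_not_range halpha hadj hdeg ⟨f, hf⟩
  · rw [hcz]
    field_simp

end StmtAux
namespace StmtAux

variable {p : ℕ} [Fact p.Prime] {F K : Type} [Field F] [Field K] [Algebra F K]
variable {sigma : K ≃ₐ[F] K}

/-- Key structure lemma: any nonzero `y : K` whose `p`-th power is `σ`-fixed is of the form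
`h·αᵉ` with `h ∈ F^×` and `e < p`. -/
lemma aux_key {xi : F} (hxi : IsPrimitiveRoot xi p) {a : Fˣ} {alpha : K}
    (halpha : alpha ^ p = algebraMap F K a)
    (hadj : Algebra.adjoin F {alpha} = ⊤)
    (hdeg : Module.finrank F K = p) (hGal : IsGalois F K)
    (hgen : ∀ eta : K ≃ₐ[F] K, eta ∈ Subgroup.zpowers sigma)
    (y : K) (hy : y ≠ 0) (hfix : sigma (y ^ p) = y ^ p) :
    ∃ e < p, ∃ h : Fˣ, y = algebraMap F K (h : F) * alpha ^ e := by
  have hp : p.Prime := Fact.out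
  haveI : NeZero p := ⟨hp.ne_zero⟩
  have h0 : alpha ≠ 0 := aux_alpha_ne_zero halpha
  set ξK := algebraMap F K xi with hξK
  have hxipow : ξK ^ p = 1 := by rw [hξK, ← map_pow, hxi.pow_eq_one, map_one]
  have hxne : ξK ≠ 0 := by
    intro h
    rw [h, zero_pow hp.ne_zero] at hxipow
    exact zero_ne_one hxipow
  have hzeta : (sigma y * y⁻¹) ^ p = 1 := by
    rw [mul_pow, inv_pow, ← map_pow, hfix]
    field_simp
  obtain ⟨r, hr, hrz⟩ := aux_root hxi hzeta
  obtain ⟨c, hc, hcd, hsa⟩ := aux_sigma_alpha hxi halpha hadj hdeg hGal hgen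
  have hξord : ∀ n : ℤ, (p : ℤ) ∣ n → ξK ^ n = 1 := fun n hn =>
    ((hxi.map_of_injective (algebraMap F K).injective).zpow_eq_one_iff_dvd n).mpr hn
  have hcz : (c : ZMod p) ≠ 0 := by
    rw [Ne, ZMod.natCast_eq_zero_iff]
    exact hcd
  set e : ℕ := ((r : ZMod p) * (c : ZMod p)⁻¹).val with he
  have hep : e < p := ZMod.val_lt _
  have hmod : ((c * e : ℕ) : ZMod p) = (r : ZMod p) := by
    push_cast
    rw [he, ZMod.natCast_rightInverse ((r : ZMod p) * (c : ZMod p)⁻¹),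
      mul_comm ((r : ZMod p)) ((c : ZMod p))⁻¹, ← mul_assoc, mul_inv_cancel₀ hcz, one_mul]
  have hmodeq : (c * e) ≡ r [MOD p] := (ZMod.natCast_eq_natCast_iff _ _ _).mp hmod
  have hone : ξK ^ (c * e) = ξK ^ r := by
    have h1 := hξord (((c * e : ℕ) : ℤ) - ((r : ℕ) : ℤ)) hmodeq.symm.dvd
    rw [zpow_sub₀ hxne, zpow_natCast, zpow_natCast] at h1
    exact (div_eq_one_iff_eq (pow_ne_zero _ hxne)).mp h1
  have hsy : sigma y = ξK ^ r * y := by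
    rw [hrz]
    field_simp
  have hzfix : sigma (y * (alpha ^ e)⁻¹) = y * (alpha ^ e)⁻¹ := by
    calc sigma (y * (alpha ^ e)⁻¹)
        = (ξK ^ r * y) * ((ξK ^ c * alpha) ^ e)⁻¹ := by
          rw [map_mul, map_inv₀, map_pow, hsy, hsa]
      _ = (ξK ^ (c * e))⁻¹ * ξK ^ r * (y * (alpha ^ e)⁻¹) := by
          rw [mul_pow, ← pow_mul, mul_inv]
          ring
      _ = y * (alpha ^ e)⁻¹ := by
          rw [hone, inv_mul_cancel₀ (pow_ne_zero _ hxne), one_mul]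
  obtain ⟨f, hf⟩ := aux_fixed hdeg hGal hgen _ hzfix
  have hzne : y * (alpha ^ e)⁻¹ ≠ 0 := by
    apply mul_ne_zero hy
    exact inv_ne_zero (pow_ne_zero _ h0)
  have hf0 : f ≠ 0 := by
    intro h
    rw [h, map_zero] at hf
    exact hzne hf.symm
  refine ⟨e, hep, Units.mk0 f hf0, ?_⟩
  show y = algebraMap F K f * alpha ^ e
  rw [hf, mul_assoc, inv_mul_cancel₀ (pow_ne_zero _ h0), mul_one]

end StmtAux
namespace StmtAux

variable {p : ℕ} [Fact p.Prime] {F K : Type} [Field F] [Field K] [Algebra F K]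
variable {sigma : K ≃ₐ[F] K}

lemma aux_ord (hdeg : Module.finrank F K = p) (hGal : IsGalois F K)
    (hgen : ∀ eta : K ≃ₐ[F] K, eta ∈ Subgroup.zpowers sigma) : orderOf sigma = p := by
  haveI : FiniteDimensional F K := aux_findim hdeg
  rw [orderOf_eq_card_of_forall_mem_zpowers hgen,
    IsGalois.card_aut_eq_finrank, hdeg]

lemma aux_norm_prod (hdeg : Module.finrank F K = p) (hGal : IsGalois F K)
    (hgen : ∀ eta : K ≃ₐ[F] K, eta ∈ Subgroup.zpowers sigma) (x : K) :
    algebraMap F K (Algebra.norm F x) = ∏ k ∈ Finset.range p, (sigma ^ k) x := by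
  have hp : p.Prime := Fact.out
  haveI : FiniteDimensional F K := aux_findim hdeg
  have hord := aux_ord hdeg hGal hgen
  rw [Algebra.norm_eq_prod_automorphisms]
  symm
  apply Finset.prod_bij (fun (k : ℕ) (_ : k ∈ Finset.range p) => sigma ^ k)
  · intro k _
    exact Finset.mem_univ _
  · intro i hi j hj hij
    exact pow_injOn_Iio_orderOf (by rw [Set.mem_Iio, hord]; exact Finset.mem_range.mp hi)
      (by rw [Set.mem_Iio, hord]; exact Finset.mem_range.mp hj) hij
  · intro η _
    obtain ⟨n, rfl⟩ := hgen η
    have h1 : 0 ≤ n % (p : ℤ) := Int.emod_nonneg n (by exact_mod_cast hp.ne_zero)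
    have h2 : n % (p : ℤ) < p := Int.emod_lt_of_pos n (by exact_mod_cast hp.pos)
    refine ⟨(n % (p : ℤ)).toNat, Finset.mem_range.mpr (by omega), ?_⟩
    have h3 := zpow_mod_orderOf sigma n
    rw [hord] at h3
    rw [← zpow_natCast, Int.toNat_of_nonneg h1, h3]
  · intro k _
    rfl

/-- `cu v m = ∏_{i<m} σ^i(v)` as a unit. -/
noncomputable def cu (p : ℕ) (K F : Type) [Field K] [Field F] [Algebra F K]
    (sigma : K ≃ₐ[F] K) (v : Kˣ) (m : ℕ) : Kˣ :=
  ∏ i ∈ Finset.range m, sigU p K F (sigma ^ i) v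

omit [Fact p.Prime] in
lemma sigU_one (u : Kˣ) : sigU p K F 1 u = u := Units.ext rfl

omit [Fact p.Prime] in
lemma sigU_mul (η θ : K ≃ₐ[F] K) (u : Kˣ) :
    sigU p K F (η * θ) u = sigU p K F η (sigU p K F θ u) := Units.ext rfl

omit [Fact p.Prime] in
lemma cu_zero (v : Kˣ) : cu p K F sigma v 0 = 1 := Finset.prod_range_zero _

omit [Fact p.Prime] in
lemma cu_one (v : Kˣ) : cu p K F sigma v 1 = v := by
  rw [cu, Finset.prod_range_one, pow_zero, sigU_one]

omit [Fact p.Prime] in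
lemma cu_succ (v : Kˣ) (m : ℕ) :
    cu p K F sigma v (m + 1) = cu p K F sigma v m * sigU p K F (sigma ^ m) v :=
  Finset.prod_range_succ _ _

omit [Fact p.Prime] in
lemma cu_shift (v : Kˣ) (m : ℕ) :
    cu p K F sigma v (m + 1) = sigU p K F sigma (cu p K F sigma v m) * v := by
  simp only [cu, map_prod]
  rw [Finset.prod_range_succ', pow_zero, sigU_one]
  congr 1
  apply Finset.prod_congr rfl
  intro i _
  rw [← sigU_mul, ← pow_succ']

omit [Fact p.Prime] in
lemma cu_add (v : Kˣ) (m n : ℕ) :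
    cu p K F sigma v (m + n) = cu p K F sigma v m * sigU p K F (sigma ^ m) (cu p K F sigma v n) := by
  simp only [cu, map_prod]
  rw [Finset.prod_range_add]
  congr 1
  apply Finset.prod_congr rfl
  intro i _
  rw [← sigU_mul, ← pow_add]

omit [Fact p.Prime] in
lemma cu_coe (v : Kˣ) (m : ℕ) :
    ((cu p K F sigma v m : Kˣ) : K) = ∏ i ∈ Finset.range m, (sigma ^ i) (v : K) := by
  rw [cu, Units.coe_prod]
  rfl

end StmtAux
namespace StmtAux

variable {p : ℕ} [Fact p.Prime] {F K : Type} [Field F] [Field K] [Algebra F K]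
variable {sigma : K ≃ₐ[F] K}

lemma aux_a_not_pow {xi : F} (hxi : IsPrimitiveRoot xi p) {a : Fˣ} {alpha : K}
    (halpha : alpha ^ p = algebraMap F K a)
    (hadj : Algebra.adjoin F {alpha} = ⊤)
    (hdeg : Module.finrank F K = p) : ∀ b : Fˣ, b ^ p ≠ a := by
  intro b hb
  have h0 : alpha ≠ 0 := aux_alpha_ne_zero halpha
  have hbne : algebraMap F K (b : F) ≠ 0 := by
    simpa using (algebraMap F K).injective.ne (a := (b : F)) (b := 0) b.ne_zero
  have hz : (alpha * (algebraMap F K (b : F))⁻¹) ^ p = 1 := by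
    rw [mul_pow, inv_pow, ← map_pow, halpha]
    have : ((b : F)) ^ p = (a : F) := by exact_mod_cast congrArg Units.val hb
    rw [this]
    field_simp
  obtain ⟨r, _, hr⟩ := aux_root hxi hz
  apply aux_alpha_not_range halpha hadj hdeg
  refine ⟨xi ^ r * (b : F), ?_⟩
  rw [map_mul, map_pow, hr]
  field_simp

lemma aux_e_zero {a : Fˣ} (hnp : ∀ b : Fˣ, b ^ p ≠ a) {e : ℕ} (hep : e < p) (w : Fˣ)
    (hw : a ^ e = w ^ p) : e = 0 := by
  by_contra he
  have hp : p.Prime := Fact.out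
  have hco : Nat.Coprime p e := (Nat.Prime.coprime_iff_not_dvd hp).mpr
    (fun hd => he (Nat.eq_zero_of_dvd_of_lt hd hep))
  have hb : (1 : ℤ) = p * Nat.gcdA p e + e * Nat.gcdB p e := by
    have := Nat.gcd_eq_gcd_ab p e
    rwa [Nat.Coprime.gcd_eq_one hco, Nat.cast_one] at this
  apply hnp (a ^ Nat.gcdA p e * w ^ Nat.gcdB p e)
  have key : (a ^ Nat.gcdA p e * w ^ Nat.gcdB p e) ^ (p : ℤ) = a := by
    rw [mul_zpow, ← zpow_mul, ← zpow_mul, mul_comm (Nat.gcdA p e) ((p : ℤ)),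
      mul_comm (Nat.gcdB p e) ((p : ℤ))]
    have h2 : w ^ ((p : ℤ) * Nat.gcdB p e) = a ^ ((e : ℤ) * Nat.gcdB p e) := by
      rw [zpow_mul, zpow_mul, zpow_natCast, zpow_natCast, hw]
    rw [h2, ← zpow_add, ← hb, zpow_one]
  rw [← zpow_natCast (a ^ Nat.gcdA p e * w ^ Nat.gcdB p e) p]
  exact key

lemma aux_package {xi : F} (hxi : IsPrimitiveRoot xi p) {a : Fˣ} {alpha : K}
    (halpha : alpha ^ p = algebraMap F K a)
    (hadj : Algebra.adjoin F {alpha} = ⊤)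
    (hdeg : Module.finrank F K = p) (hGal : IsGalois F K)
    (hgen : ∀ eta : K ≃ₐ[F] K, eta ∈ Subgroup.zpowers sigma)
    (u v : Kˣ) (hσu : sigma (u : K) = (u : K) * (v : K) ^ p) :
    ∃ e < p, ∃ h : Fˣ, Algebra.norm F ((u : K)) = (h : F) ^ p * (a : F) ^ e ∧
      (e = 0 → Algebra.norm F ((v : K)) = 1) := by
  have hp : p.Prime := Fact.out
  set t : Kˣ := ∏ k ∈ Finset.range p, cu p K F sigma v k with ht
  have hk : ∀ k : ℕ, (sigma ^ k) (u : K) = (u : K) * ((cu p K F sigma v k : Kˣ) : K) ^ p := by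
    intro k
    induction k with
    | zero => simp [cu_zero]
    | succ n ih =>
      rw [pow_succ, AlgEquiv.mul_apply, hσu, map_mul, map_pow, ih, cu_succ,
        Units.val_mul, sigU_coe, mul_pow]
      ring
  have hNu : algebraMap F K (Algebra.norm F (u : K)) = ((u : K) * (t : K)) ^ p := by
    rw [aux_norm_prod hdeg hGal hgen]
    calc ∏ k ∈ Finset.range p, (sigma ^ k) (u : K)
        = ∏ k ∈ Finset.range p, ((u : K) * ((cu p K F sigma v k : Kˣ) : K) ^ p) :=
          Finset.prod_congr rfl (fun k _ => hk k)
      _ = (u : K) ^ p * ((t : K)) ^ p := by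
          rw [Finset.prod_mul_distrib, Finset.prod_pow, Finset.prod_const, Finset.card_range,
            ht, Units.coe_prod]
      _ = ((u : K) * (t : K)) ^ p := (mul_pow _ _ _).symm
  have hσt : sigU p K F sigma t * v ^ p = t * cu p K F sigma v p := by
    have h1 : sigU p K F sigma t * v ^ p = ∏ k ∈ Finset.range p, cu p K F sigma v (k + 1) := by
      rw [ht, map_prod, ← Finset.card_range p, ← Finset.prod_const (b := v),
        Finset.card_range, ← Finset.prod_mul_distrib]
      exact Finset.prod_congr rfl (fun k _ => (cu_shift v k).symm)
    have h2 := Finset.prod_range_succ' (fun k => cu p K F sigma v k) p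
    rw [Finset.prod_range_succ, cu_zero, mul_one] at h2
    rw [h1, ← h2, ht]
  have hy : ((u : K) * (t : K)) ≠ 0 := mul_ne_zero u.ne_zero t.ne_zero
  have hfix : sigma (((u : K) * (t : K)) ^ p) = ((u : K) * (t : K)) ^ p := by
    rw [← hNu, AlgEquiv.commutes]
  obtain ⟨e, hep, h, hyh⟩ := aux_key hxi halpha hadj hdeg hGal hgen _ hy hfix
  refine ⟨e, hep, h, ?_, ?_⟩
  · apply (algebraMap F K).injective
    rw [hNu, hyh, map_mul, map_pow, map_pow, mul_pow, ← pow_mul, mul_comm e p, pow_mul, halpha]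
  · intro he0
    subst he0
    rw [pow_zero, mul_one] at hyh
    have hfixy : sigma ((u : K) * (t : K)) = (u : K) * (t : K) := by
      rw [hyh, AlgEquiv.commutes]
    have hvne : ((v : K)) ^ p ≠ 0 := pow_ne_zero _ v.ne_zero
    have h6 : sigma (t : K) * ((v : K)) ^ p = (t : K) * ((cu p K F sigma v p : Kˣ) : K) := by
      have := congrArg (Units.coeHom K) hσt
      simpa using this
    have h7 : sigma (t : K) = (t : K) * ((cu p K F sigma v p : Kˣ) : K) / ((v : K)) ^ p :=
      (eq_div_iff hvne).mpr h6
    have h2 : sigma ((u : K) * (t : K)) =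
        ((u : K) * (t : K)) * ((cu p K F sigma v p : Kˣ) : K) := by
      apply mul_right_cancel₀ hvne
      have hre : ((u : K) * (v : K) ^ p) * sigma (t : K) * (v : K) ^ p =
          ((u : K) * (v : K) ^ p) * (sigma (t : K) * (v : K) ^ p) := by ring
      rw [map_mul, hσu, hre, h6]
      ring
    have h4 : ((u : K) * (t : K)) * 1 = ((u : K) * (t : K)) * ((cu p K F sigma v p : Kˣ) : K) := by
      rw [mul_one, ← h2, hfixy]
    have h3 := (mul_left_cancel₀ hy h4).symm
    apply (algebraMap F K).injective
    rw [map_one, aux_norm_prod hdeg hGal hgen, ← cu_coe]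
    exact h3

end StmtAux
namespace StmtAux

variable {p : ℕ} [Fact p.Prime] {F K : Type} [Field F] [Field K] [Algebra F K]
variable {sigma : K ≃ₐ[F] K}

lemma aux_hilbert (hdeg : Module.finrank F K = p) (hGal : IsGalois F K)
    (hgen : ∀ eta : K ≃ₐ[F] K, eta ∈ Subgroup.zpowers sigma)
    (u v : Kˣ) (hσu : sigma (u : K) = (u : K) * (v : K) ^ p)
    (hnv : Algebra.norm F ((v : K)) = 1) :
    ∃ (f : Fˣ) (β : Kˣ), u = Units.map (algebraMap F K).toMonoidHom f * β ^ p := by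
  haveI : FiniteDimensional F K := aux_findim hdeg
  have hord := aux_ord hdeg hGal hgen
  have hp : p.Prime := Fact.out
  have hcup : cu p K F sigma v p = 1 := by
    apply Units.ext
    rw [cu_coe, ← aux_norm_prod hdeg hGal hgen, hnv, map_one, Units.val_one]
  have hper : ∀ m, cu p K F sigma v (m + p) = cu p K F sigma v m := by
    intro m
    rw [cu_add, hcup, map_one, mul_one]
  have hmul : ∀ q m, cu p K F sigma v (m + q * p) = cu p K F sigma v m := by
    intro q
    induction q with
    | zero => simp
    | succ n ih =>
      intro m
      rw [show m + (n + 1) * p = (m + n * p) + p by ring, hper, ih]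
  have hmod : ∀ m, cu p K F sigma v m = cu p K F sigma v (m % p) := by
    intro m
    have := hmul (m / p) (m % p)
    rw [← this]
    congr 1
    exact (Nat.mod_add_div' m p).symm
  have hwd : ∀ m n : ℕ, sigma ^ m = sigma ^ n → cu p K F sigma v m = cu p K F sigma v n := by
    intro m n hmn
    have h1 := pow_inj_mod.mp hmn
    rw [hord] at h1
    rw [hmod m, hmod n, h1]
  have hexp : ∀ η : K ≃ₐ[F] K, ∃ k : ℕ, sigma ^ k = η := by
    intro η
    obtain ⟨n, rfl⟩ := hgen η
    have h1 : 0 ≤ n % (p : ℤ) := Int.emod_nonneg n (by exact_mod_cast hp.ne_zero)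
    refine ⟨(n % (p : ℤ)).toNat, ?_⟩
    have h3 := zpow_mod_orderOf sigma n
    rw [hord] at h3
    rw [← zpow_natCast, Int.toNat_of_nonneg h1, h3]
  set f : (K ≃ₐ[F] K) → Kˣ := fun η => cu p K F sigma v (Classical.choose (hexp η)) with hf
  have hfeq : ∀ (η : K ≃ₐ[F] K) (k : ℕ), sigma ^ k = η → f η = cu p K F sigma v k := by
    intro η k hk
    exact hwd _ _ ((Classical.choose_spec (hexp η)).trans hk.symm)
  have hcoc : groupCohomology.IsMulCocycle₁ f := by
    intro g h'
    have hg := Classical.choose_spec (hexp g)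
    have hh := Classical.choose_spec (hexp h')
    have h1 : f (g * h') =
        cu p K F sigma v (Classical.choose (hexp g) + Classical.choose (hexp h')) :=
      hfeq _ _ (by rw [pow_add, hg, hh])
    have h2 : g • f h' = sigU p K F g (cu p K F sigma v (Classical.choose (hexp h'))) := by
      rw [AlgEquiv.smul_units_def]
      exact Units.ext rfl
    rw [h1, cu_add, h2, hg]
    exact mul_comm _ _
  obtain ⟨β, hβ⟩ := groupCohomology.isMulCoboundary₁_of_isMulCocycle₁_of_aut_to_units f hcoc
  have hβσ := hβ sigma
  have hfσ : f sigma = v := by rw [hfeq sigma 1 (pow_one sigma), cu_one]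
  rw [hfσ, AlgEquiv.smul_units_def] at hβσ
  have h5 : Units.map (sigma : K →* K) β = sigU p K F sigma β := Units.ext rfl
  rw [h5] at hβσ
  have hβv : sigU p K F sigma β = v * β := div_eq_iff_eq_mul.mp hβσ
  have hb : sigma (β : K) = (v : K) * (β : K) := by
    have := congrArg (Units.coeHom K) hβv
    simpa using this
  have hwfix : sigma ((u : K) * (((β : K)) ^ p)⁻¹) = (u : K) * (((β : K)) ^ p)⁻¹ := by
    rw [map_mul, map_inv₀, map_pow, hσu, hb]
    have hbne : (β : K) ≠ 0 := β.ne_zero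
    have hvne : (v : K) ≠ 0 := v.ne_zero
    field_simp
    ring
  obtain ⟨f0, hf0⟩ := aux_fixed hdeg hGal hgen _ hwfix
  have hf0ne : f0 ≠ 0 := by
    intro h
    rw [h, map_zero] at hf0
    exact (mul_ne_zero u.ne_zero (inv_ne_zero (pow_ne_zero _ β.ne_zero))) hf0.symm
  refine ⟨Units.mk0 f0 hf0ne, β, ?_⟩
  apply Units.ext
  rw [Units.val_mul, Units.coe_map, Units.val_pow_eq_pow_val]
  have hfin : algebraMap F K f0 * (β : K) ^ p = (u : K) := by
    rw [hf0, mul_assoc, inv_mul_cancel₀ (pow_ne_zero _ β.ne_zero), mul_one]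
  exact hfin.symm

end StmtAux

open StmtAux

/-- Exactness of `0 → ⟨[a]⟩ → F^×/F^{×p} → J₁ → ⟨[a]⟩`, where the second map `ε` is induced
by the inclusion `F^× ⊆ K^×`, `J₁` is the `G`-fixed part of `J = K^×/K^{×p}`, and the last
map is induced by the norm: (1) `ker ε = ⟨[a]⟩`; (2) the norm carries `J₁` into `⟨[a]⟩`;
(3) for `x ∈ J₁`, `N(x) = 1` iff `x` lies in the image of `ε`.  Consequently, if
`[γ] ∈ J₁` and `N_{K/F}(γ) ∈ a^{pℤ}·F^{×p}`, then `[γ] = [f]` for some `f ∈ F^×`. -/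
theorem stmt_12 (p : ℕ) [Fact p.Prime]
    (F K : Type) [Field F] [Field K] [Algebra F K]
    (xi : F) (hxi : IsPrimitiveRoot xi p)
    (a : Fˣ) (alpha : K) (halpha : alpha ^ p = algebraMap F K a)
    (hadj : Algebra.adjoin F {alpha} = ⊤)
    (hdeg : Module.finrank F K = p)
    (sigma : K ≃ₐ[F] K) (hgen : ∀ eta : K ≃ₐ[F] K, eta ∈ Subgroup.zpowers sigma) :
    (∀ x : Jmod p F, epsJ p F K x = 1 ↔ x ∈ Subgroup.zpowers (mkJ p F a)) ∧
    (∀ u : Kˣ, rhoJ p K F sigma (mkJ p K u) = 1 →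
      normJ p F K (mkJ p K u) ∈ Subgroup.zpowers (mkJ p F a)) ∧
    (∀ u : Kˣ, rhoJ p K F sigma (mkJ p K u) = 1 →
      (normJ p F K (mkJ p K u) = 1 ↔ ∃ f : Fˣ, mkJ p K u = epsJ p F K (mkJ p F f))) ∧
    (∀ γ : Kˣ, rhoJ p K F sigma (mkJ p K γ) = 1 →
      (∃ (s : ℤ) (g : Fˣ),
          Units.map (Algebra.norm F : K →* F) γ = a ^ ((p : ℤ) * s) * g ^ p) →
      ∃ f : Fˣ, mkJ p K γ = mkJ p K (Units.map (algebraMap F K).toMonoidHom f)) := by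
  have hp : p.Prime := Fact.out
  haveI : FiniteDimensional F K := aux_findim hdeg
  have hGal : IsGalois F K := aux_galois hxi halpha hadj hdeg
  have h0 : alpha ≠ 0 := aux_alpha_ne_zero halpha
  have hepsmk : ∀ f : Fˣ,
      epsJ p F K (mkJ p F f) = mkJ p K (Units.map (algebraMap F K).toMonoidHom f) :=
    fun f => rfl
  have hnormmk : ∀ u : Kˣ,
      normJ p F K (mkJ p K u) = mkJ p F (Units.map (Algebra.norm F : K →* F) u) :=
    fun u => rfl
  have hponeF : ∀ w : Fˣ, mkJ p F (w ^ p) = 1 :=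
    fun w => (QuotientGroup.eq_one_iff _).mpr ⟨w, rfl⟩
  have hponeK : ∀ w : Kˣ, mkJ p K (w ^ p) = 1 :=
    fun w => (QuotientGroup.eq_one_iff _).mpr ⟨w, rfl⟩
  have hmka : epsJ p F K (mkJ p F a) = 1 := by
    rw [hepsmk]
    apply (QuotientGroup.eq_one_iff _).mpr
    refine ⟨Units.mk0 alpha h0, Units.ext ?_⟩
    show alpha ^ p = ((Units.map (algebraMap F K).toMonoidHom a : Kˣ) : K)
    rw [halpha]
    rfl
  have hrho : ∀ u : Kˣ, rhoJ p K F sigma (mkJ p K u) = 1 →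
      ∃ v : Kˣ, sigma (u : K) = (u : K) * (v : K) ^ p := by
    intro u hu
    have h2 : sigJ p K F sigma (mkJ p K u) = mkJ p K (sigU p K F sigma u) := rfl
    have h1 : mkJ p K (sigU p K F sigma u) * (mkJ p K u)⁻¹ = 1 := by
      rw [← h2]; exact hu
    have h3 : mkJ p K (sigU p K F sigma u * u⁻¹) = 1 := by
      rw [map_mul, map_inv]; exact h1
    obtain ⟨v, hv⟩ := (QuotientGroup.eq_one_iff _).mp h3
    refine ⟨v, ?_⟩
    have h5 : sigU p K F sigma u = powMonoidHom p v * u := mul_inv_eq_iff_eq_mul.mp hv.symm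
    have h6 := congrArg (Units.coeHom K) h5
    simpa [powMonoidHom, mul_comm] using h6
  -- Statement (1)
  have st1 : ∀ x : Jmod p F, epsJ p F K x = 1 ↔ x ∈ Subgroup.zpowers (mkJ p F a) := by
    intro x
    constructor
    · intro hx
      obtain ⟨fu, rfl⟩ := QuotientGroup.mk'_surjective (pthPowers p F) x
      have h1 : mkJ p K (Units.map (algebraMap F K).toMonoidHom fu) = 1 := by
        rw [← hepsmk]; exact hx
      obtain ⟨y, hy⟩ := (QuotientGroup.eq_one_iff _).mp h1
      have hy' : ((y : K)) ^ p = algebraMap F K (fu : F) := by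
        have := congrArg (Units.coeHom K) hy
        simpa [powMonoidHom] using this
      have hyfix : sigma (((y : K)) ^ p) = ((y : K)) ^ p := by
        rw [hy', AlgEquiv.commutes]
      obtain ⟨e, hep, h, hyh⟩ := aux_key hxi halpha hadj hdeg hGal hgen _ y.ne_zero hyfix
      have hfu : (fu : F) = (h : F) ^ p * (a : F) ^ e := by
        apply (algebraMap F K).injective
        rw [map_mul, map_pow, map_pow, ← hy', hyh, mul_pow, ← pow_mul, mul_comm e p,
          pow_mul, halpha]
      have hfu' : fu = h ^ p * a ^ e := Units.ext (by
        rw [Units.val_mul, Units.val_pow_eq_pow_val, Units.val_pow_eq_pow_val]; exact hfu)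
      have hmk : mkJ p F fu = (mkJ p F a) ^ e := by
        rw [hfu', map_mul, map_pow, map_pow, ← map_pow, hponeF h, one_mul]
      exact Subgroup.mem_zpowers_iff.mpr ⟨(e : ℤ), by rw [zpow_natCast]; exact hmk.symm⟩
    · intro hx
      obtain ⟨n, hn⟩ := Subgroup.mem_zpowers_iff.mp hx
      rw [← hn, map_zpow, hmka, one_zpow]
  -- Statement (2)
  have st2 : ∀ u : Kˣ, rhoJ p K F sigma (mkJ p K u) = 1 →
      normJ p F K (mkJ p K u) ∈ Subgroup.zpowers (mkJ p F a) := by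
    intro u hu
    obtain ⟨v, hv⟩ := hrho u hu
    obtain ⟨e, hep, h, hnorm, _⟩ := aux_package hxi halpha hadj hdeg hGal hgen u v hv
    have h2 : Units.map (Algebra.norm F : K →* F) u = h ^ p * a ^ e := Units.ext (by
      rw [Units.val_mul, Units.val_pow_eq_pow_val, Units.val_pow_eq_pow_val, Units.coe_map]
      exact hnorm)
    rw [hnormmk, h2, map_mul, map_pow, map_pow, ← map_pow, hponeF h, one_mul]
    exact Subgroup.mem_zpowers_iff.mpr ⟨(e : ℤ), by rw [zpow_natCast]⟩
  -- Statement (3)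
  have st3 : ∀ u : Kˣ, rhoJ p K F sigma (mkJ p K u) = 1 →
      (normJ p F K (mkJ p K u) = 1 ↔ ∃ f : Fˣ, mkJ p K u = epsJ p F K (mkJ p F f)) := by
    intro u hu
    obtain ⟨v, hv⟩ := hrho u hu
    constructor
    · intro hn1
      obtain ⟨e, hep, h, hnorm, himp⟩ := aux_package hxi halpha hadj hdeg hGal hgen u v hv
      rw [hnormmk] at hn1
      obtain ⟨g, hg⟩ := (QuotientGroup.eq_one_iff _).mp hn1
      have heq : h ^ p * a ^ e = g ^ p := Units.ext (by
        have h6 := congrArg (Units.coeHom F) hg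
        simp only [powMonoidHom, Units.coeHom_apply, MonoidHom.coe_mk, OneHom.coe_mk,
          Units.val_pow_eq_pow_val, Units.coe_map] at h6
        rw [Units.val_mul, Units.val_pow_eq_pow_val, Units.val_pow_eq_pow_val, ← hnorm]
        exact h6.symm)
      have he0 : e = 0 := aux_e_zero (aux_a_not_pow hxi halpha hadj hdeg) hep (g * h⁻¹) (by
        rw [mul_pow, inv_pow, ← heq, mul_comm ((h : Fˣ) ^ p) ((a : Fˣ) ^ e), mul_assoc,
          mul_inv_cancel, mul_one])
      have hnv : Algebra.norm F ((v : K)) = 1 := himp he0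
      obtain ⟨f, β, huf⟩ := aux_hilbert hdeg hGal hgen u v hv hnv
      refine ⟨f, ?_⟩
      rw [hepsmk, huf, map_mul, hponeK β, mul_one]
    · rintro ⟨f, hf⟩
      rw [hepsmk f] at hf
      have h1 : mkJ p K (u * (Units.map (algebraMap F K).toMonoidHom f)⁻¹) = 1 := by
        rw [map_mul, map_inv, hf, mul_inv_cancel]
      obtain ⟨w, hw⟩ := (QuotientGroup.eq_one_iff _).mp h1
      have hu2 : u = w ^ p * Units.map (algebraMap F K).toMonoidHom f := by
        have := mul_inv_eq_iff_eq_mul.mp hw.symm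
        simpa [powMonoidHom] using this
      have h3 : Units.map (Algebra.norm F : K →* F) u =
          (Units.map (Algebra.norm F : K →* F) w * f) ^ p := by
        apply Units.ext
        rw [Units.coe_map, Units.val_pow_eq_pow_val, Units.val_mul, Units.coe_map]
        have hcoe : (u : K) = ((w : K)) ^ p * algebraMap F K (f : F) := by
          have := congrArg (Units.coeHom K) hu2
          simpa using this
        rw [hcoe, map_mul, map_pow, mul_pow]
        congr 1
        show Algebra.norm F (algebraMap F K (f : F)) = (f : F) ^ p
        rw [Algebra.norm_algebraMap, hdeg]
      rw [hnormmk, h3]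
      exact hponeF _
  refine ⟨st1, st2, st3, ?_⟩
  -- Statement (4)
  intro γ hγ hex
  obtain ⟨s, g, hng⟩ := hex
  have h1 : normJ p F K (mkJ p K γ) = 1 := by
    rw [hnormmk]
    apply (QuotientGroup.eq_one_iff _).mpr
    refine ⟨a ^ s * g, ?_⟩
    show (a ^ s * g) ^ p = Units.map (Algebra.norm F : K →* F) γ
    rw [hng, mul_pow, ← zpow_natCast (a ^ s), ← zpow_mul, mul_comm s ((p : ℤ))]
  obtain ⟨f, hf⟩ := (st3 γ hγ).mp h1
  refine ⟨f, ?_⟩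
  rw [hf, hepsmk]
end

section
/- Let p be an odd prime, F a field containing a primitive p-th root of unity ξ_p, and K = F(a^{1/p}) cyclic of degree p over F with σ(a^{1/p}) = ξ_p a^{1/p}. If ξ_p ∉ N_{K/F}(K^×), then the class [a^{1/p}] ∈ J = K^×/K^{×p} satisfies [a^{1/p}]^{(σ-1)^2} = [1] but [a^{1/p}]^{σ-1} ≠ [1]; that is, the cyclic F_p[G]-submodule generated by [a^{1/p}] has length exactly 2. -/
open Polynomial in
private lemma fix_zpow_aux {F K : Type} [Field F] [Field K] [Algebra F K]
    (σ : K ≃ₐ[F] K) (x : K) (hx : σ x = x) : ∀ n : ℤ, (σ ^ n) x = x := by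
  have hn : ∀ n : ℕ, (σ ^ n) x = x := by
    intro n
    induction n with
    | zero => simp
    | succ m ih => rw [pow_succ, AlgEquiv.mul_apply, hx, ih]
  intro n
  rcases n with n | n
  · simpa using hn n
  · rw [zpow_negSucc]
    have : ((σ ^ (n + 1))⁻¹ : K ≃ₐ[F] K) = (σ ^ (n + 1)).symm := rfl
    rw [this, AlgEquiv.symm_apply_eq, hn (n + 1)]

open Polynomial in
/-- Let `K = F(a^{1/p})` with `σ(a^{1/p}) = ξ·a^{1/p}`.  If `ξ ∉ N_{K/F}(K^×)`, then the
class of `a^{1/p}` in `J = K^×/K^{×p}` satisfies `[a^{1/p}]^{(σ-1)²} = [1]` but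
`[a^{1/p}]^{σ-1} ≠ [1]`: the cyclic `𝔽_p[G]`-submodule it generates has length exactly 2. -/
theorem stmt_13 (p : ℕ) [Fact p.Prime] (hp2 : Odd p)
    (F K : Type) [Field F] [Field K] [Algebra F K]
    (xi : F) (hxi : IsPrimitiveRoot xi p)
    (a : Fˣ) (alpha : Kˣ) (halpha : (alpha : K) ^ p = algebraMap F K a)
    (hadj : Algebra.adjoin F {(alpha : K)} = ⊤)
    (hdeg : Module.finrank F K = p)
    (sigma : K ≃ₐ[F] K) (hgen : ∀ eta : K ≃ₐ[F] K, eta ∈ Subgroup.zpowers sigma)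
    (hsa : sigma (alpha : K) = algebraMap F K xi * (alpha : K))
    (hxinotnorm : ¬ ∃ u : Kˣ, Algebra.norm F (u : K) = xi) :
    rhoPowJ p K F sigma 2 (mkJ p K alpha) = 1 ∧
      rhoJ p K F sigma (mkJ p K alpha) ≠ 1 := by
  classical
  have hp : p.Prime := Fact.out
  have hp0 : p ≠ 0 := hp.ne_zero
  haveI : NeZero p := ⟨hp0⟩
  haveI hFD : FiniteDimensional F K := FiniteDimensional.of_finrank_pos (hdeg ▸ hp.pos)
  have hinj : Function.Injective (algebraMap F K) := (algebraMap F K).injective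
  set xi' : K := algebraMap F K xi with hxi'def
  have hxi'p : IsPrimitiveRoot xi' p := hxi.map_of_injective hinj
  have hxi0 : xi' ≠ 0 := by
    intro h
    have := hxi'p.pow_eq_one
    rw [h, zero_pow hp0] at this
    exact zero_ne_one this
  set xiu : Kˣ := Units.mk0 xi' hxi0 with hxiudef
  -- σ acting on units
  have hsigU_val : ∀ u : Kˣ, ((sigU p K F sigma u : Kˣ) : K) = sigma (u : K) := fun u => rfl
  have hsigU : sigU p K F sigma alpha = xiu * alpha := by
    ext
    rw [hsigU_val, hsa]
    rfl
  have hsigUxi : sigU p K F sigma xiu = xiu := by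
    ext
    rw [hsigU_val]
    exact sigma.commutes xi
  -- (σ-1)[α] = [ξ]
  have hrho : ∀ u : Kˣ, rhoJ p K F sigma (mkJ p K u) = mkJ p K (sigU p K F sigma u * u⁻¹) := by
    intro u
    show sigJ p K F sigma (mkJ p K u) * (mkJ p K u)⁻¹ = _
    rw [show sigJ p K F sigma (mkJ p K u) = mkJ p K (sigU p K F sigma u) from rfl,
      ← map_inv, ← map_mul]
  have h1 : rhoJ p K F sigma (mkJ p K alpha) = mkJ p K xiu := by
    rw [hrho, hsigU, mul_inv_cancel_right]
  refine ⟨?_, ?_⟩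
  · -- (σ-1)²[α] = 1
    show rhoJ p K F sigma (rhoJ p K F sigma (rhoPowJ p K F sigma 0 (mkJ p K alpha))) = 1
    rw [show rhoPowJ p K F sigma 0 (mkJ p K alpha) = mkJ p K alpha from rfl, h1, hrho,
      hsigUxi, mul_inv_cancel, map_one]
  · -- (σ-1)[α] ≠ 1
    rw [h1]
    intro h
    obtain ⟨beta, hbeta⟩ : xiu ∈ pthPowers p K := (QuotientGroup.eq_one_iff _).mp h
    have hbK : (beta : K) ^ p = xi' := by
      have := congrArg (Units.val) hbeta
      simpa [powMonoidHom, hxiudef] using this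
    -- Galois setup
    have htop : (IntermediateField.adjoin F {(alpha : K)}) = ⊤ := by
      have hle := IntermediateField.algebra_adjoin_le_adjoin F {(alpha : K)}
      rw [hadj] at hle
      apply IntermediateField.toSubalgebra_injective
      rw [IntermediateField.top_toSubalgebra]
      exact le_antisymm le_top hle
    have hKfr : (primitiveRoots (Module.finrank F K) F).Nonempty := by
      rw [hdeg]
      exact ⟨xi, (mem_primitiveRoots hp.pos).mpr hxi⟩
    have ha' : (alpha : K) ^ (Module.finrank F K) = algebraMap F K a := by
      rw [hdeg]; exact halpha
    have H : Irreducible (X ^ (Module.finrank F K) - C (a : F)) :=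
      irreducible_X_pow_sub_C_of_root_adjoin_eq_top ha' htop
    haveI := isSplittingField_X_pow_sub_C_of_root_adjoin_eq_top hKfr ha' htop
    haveI : IsGalois F K := isGalois_of_isSplittingField_X_pow_sub_C hKfr H K
    -- minimal polynomial and norm of α
    have hint : IsIntegral F ((alpha : K)) := IsIntegral.of_finite F _
    have H' : Irreducible (X ^ p - C (a : F)) := by rwa [hdeg] at H
    have hmin : minpoly F ((alpha : K)) = X ^ p - C (a : F) :=
      (minpoly.eq_of_irreducible_of_monic H'
        (by rw [map_sub, map_pow, aeval_X, aeval_C, halpha, sub_self])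
        (monic_X_pow_sub_C _ hp0)).symm
    set pb : PowerBasis F K := (IntermediateField.adjoin.powerBasis hint).map
      ((IntermediateField.equivOfEq htop).trans IntermediateField.topEquiv) with hpbdef
    have hpbgen : pb.gen = (alpha : K) := rfl
    have hpbdim : pb.dim = p := by
      show (minpoly F ((alpha : K))).natDegree = p
      rw [hmin, natDegree_X_pow_sub_C]
    have hNalpha : Algebra.norm F ((alpha : K)) = (a : F) := by
      have hnorm := Algebra.PowerBasis.norm_gen_eq_coeff_zero_minpoly pb
      rw [hpbgen, hpbdim, hmin] at hnorm
      rw [hnorm]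
      have : (X ^ p - C (a : F)).coeff 0 = -(a : F) := by
        simp only [coeff_sub, coeff_X_pow, coeff_C_zero]
        rw [if_neg (fun h0 => hp0 h0.symm), zero_sub]
      rw [this, hp2.neg_one_pow]
      ring
    -- σ(β)/β is a p-th root of unity
    have hzeta : (sigma (beta : K) / (beta : K)) ^ p = 1 := by
      rw [div_pow, ← map_pow, hbK, hxi'def, sigma.commutes, div_self (hxi'def ▸ hxi0)]
    obtain ⟨k, hk, hkeq⟩ := hxi'p.eq_pow_of_pow_eq_one hzeta
    have hbne : (beta : K) ≠ 0 := Units.ne_zero beta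
    have hsbeta : sigma (beta : K) = xi' ^ k * (beta : K) := by
      rw [hkeq, div_mul_cancel₀ _ hbne]
    -- γ := β / α^k is fixed by σ
    set gam : Kˣ := beta * (alpha ^ k)⁻¹ with hgamdef
    have hgamval : (gam : K) = (beta : K) * ((alpha : K) ^ k)⁻¹ := by
      simp [hgamdef]
    have hgamfix : sigma (gam : K) = (gam : K) := by
      rw [hgamval, map_mul, map_inv₀, map_pow, hsa, hsbeta, mul_pow, mul_inv]
      have hxine : xi' ^ k ≠ 0 := pow_ne_zero _ hxi0
      field_simp
    have hfixall : ∀ tau : K ≃ₐ[F] K, tau (gam : K) = (gam : K) := by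
      intro tau
      obtain ⟨n, rfl⟩ := hgen tau
      exact fix_zpow_aux sigma _ hgamfix n
    have hbot : (gam : K) ∈ (⊥ : IntermediateField F K) := by
      rw [← IsGalois.fixedField_fixingSubgroup (⊥ : IntermediateField F K)]
      rintro ⟨tau, -⟩
      exact hfixall tau
    obtain ⟨e, he⟩ := IntermediateField.mem_bot.mp hbot
    have hane : ((alpha : K) ^ k) ≠ 0 := pow_ne_zero _ (Units.ne_zero alpha)
    have hebeta : (beta : K) = algebraMap F K e * (alpha : K) ^ k := by
      rw [he, hgamval]
      field_simp
    have he0 : e ≠ 0 := by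
      intro h0
      rw [h0, map_zero] at he
      exact (Units.ne_zero gam) he.symm
    -- xi = e^p * a^k
    have hxival : xi = e ^ p * (a : F) ^ k := by
      apply hinj
      rw [← hxi'def, ← hbK, hebeta, mul_pow, ← pow_mul, mul_comm k p, pow_mul,
        halpha, ← map_pow, ← map_pow, ← map_mul]
    -- produce the norm, contradiction
    set eu : Kˣ := Units.mk0 (algebraMap F K e) (fun h0 => he0 (hinj (by rw [h0, map_zero])))
      with heudef
    refine hxinotnorm ⟨eu * alpha ^ k, ?_⟩
    have : ((eu * alpha ^ k : Kˣ) : K) = algebraMap F K e * (alpha : K) ^ k := by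
      simp [heudef]
    rw [this, map_mul, map_pow, hNalpha, Algebra.norm_algebraMap, hdeg, hxival]
end
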